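/- For any MHR distribution F (one whose hazard rate f(v)/(1-F(v)) is nondecreasing) with mean μ and monopoly revenue R(q*) = max_q v(q)·q, it holds that μ ≤ e·R(q*). -/

import Mathlib

open Set intervalIntegral

/-- For any MHR distribution (with continuous positive density `f` on `[0, v̄]`,
CDF `F`, and nondecreasing hazard rate `f/(1-F)`), the mean `μ` satisfies
`μ ≤ e * R(q*)`, where `R(q*) = max_v v (1 - F v)` is the monopoly revenue. -/
theorem stmt_6 (vbar : ℝ) (hvbar : 0 < vbar)
    (f F : ℝ → ℝ)
    (hf_cont : ContinuousOn f (Icc 0 vbar))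
    (hf_pos : ∀ t ∈ Icc 0 vbar, 0 < f t)
    (hF : ∀ t ∈ Icc 0 vbar, F t = ∫ s in (0:ℝ)..t, f s)
    (hF1 : F vbar = 1)
    (hMHR : ∀ s t, s ∈ Icc 0 vbar → t ∈ Icc 0 vbar → s ≤ t → t < vbar →
      f s / (1 - F s) ≤ f t / (1 - F t))
    (mean : ℝ) (hmean : mean = ∫ t in (0:ℝ)..vbar, t * f t)
    (vstar : ℝ) (hvs : vstar ∈ Icc 0 vbar)
    (hmax : ∀ w ∈ Icc (0:ℝ) vbar, w * (1 - F w) ≤ vstar * (1 - F vstar)) :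
    mean ≤ Real.exp 1 * (vstar * (1 - F vstar)) := by
  -- clamp function
  set c : ℝ → ℝ := fun t => max 0 (min t vbar) with hc
  have hc_cont : Continuous c := by fun_prop
  have hc_mem : ∀ t, c t ∈ Icc 0 vbar := by
    intro t
    refine ⟨le_max_left _ _, max_le hvbar.le (min_le_right _ _)⟩
  have hc_eq : ∀ t ∈ Icc 0 vbar, c t = t := by
    intro t ht
    simp [hc, min_eq_left ht.2, max_eq_right ht.1]
  set fc : ℝ → ℝ := fun t => f (c t) with hfc
  have hfc_cont : Continuous fc := hf_cont.comp_continuous hc_cont hc_mem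
  have hfc_pos : ∀ t, 0 < fc t := fun t => hf_pos _ (hc_mem t)
  have hfc_eq : ∀ t ∈ Icc 0 vbar, fc t = f t := by
    intro t ht; simp [hfc, hc_eq t ht]
  set Fc : ℝ → ℝ := fun t => ∫ s in (0:ℝ)..t, fc s with hFc
  have hFc_eq : ∀ t ∈ Icc 0 vbar, Fc t = F t := by
    intro t ht
    rw [hF t ht, hFc]
    refine intervalIntegral.integral_congr (fun s hs => ?_)
    have hsub : uIcc (0:ℝ) t ⊆ Icc 0 vbar := by
      rw [uIcc_of_le ht.1]; exact Icc_subset_Icc le_rfl ht.2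
    exact hfc_eq s (hsub hs)
  have hFc_deriv : ∀ t, HasDerivAt Fc (fc t) t := by
    intro t
    exact intervalIntegral.integral_hasDerivAt_right
      (hfc_cont.intervalIntegrable _ _)
      (hfc_cont.stronglyMeasurable.stronglyMeasurableAtFilter)
      hfc_cont.continuousAt
  have hFc_cont : Continuous Fc := by
    exact continuous_iff_continuousAt.2 fun t => (hFc_deriv t).continuousAt
  have hFc_mono : StrictMono Fc :=
    strictMono_of_deriv_pos (fun t => by rw [(hFc_deriv t).deriv]; exact hfc_pos t)
  have hFc_vbar : Fc vbar = 1 := by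
    rw [hFc_eq vbar ⟨hvbar.le, le_rfl⟩, hF1]
  have hFc_lt : ∀ t, t < vbar → Fc t < 1 := by
    intro t ht; rw [← hFc_vbar]; exact hFc_mono ht
  -- positivity of the optimal revenue
  have hRpos : 0 < vstar * (1 - F vstar) := by
    have h2 : vbar / 2 ∈ Icc (0:ℝ) vbar := ⟨by linarith, by linarith⟩
    have := hmax (vbar/2) h2
    have hlt : Fc (vbar/2) < 1 := hFc_lt _ (by linarith)
    rw [← hFc_eq _ h2] at this
    nlinarith
  have hvs0 : 0 < vstar := by
    rcases hvs.1.lt_or_eq with h | h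
    · exact h
    · exfalso; rw [← h] at hRpos; simp at hRpos
  have hqs : 0 < 1 - F vstar := by nlinarith
  have hvsv : vstar < vbar := by
    rcases hvs.2.lt_or_eq with h | h
    · exact h
    · exfalso; rw [h, hF1] at hqs; simp at hqs
  -- first order condition
  have hRf : ∀ w, HasDerivAt (fun w => w * (1 - Fc w)) ((1 - Fc w) + w * (-fc w)) w := by
    intro w
    have h1 : HasDerivAt (fun w => (1 : ℝ) - Fc w) (-fc w) w := (hFc_deriv w).const_sub 1
    have := (hasDerivAt_id w).mul h1
    exact this.congr_deriv (by simp only [id_eq, one_mul])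
  have hloc : IsLocalMax (fun w => w * (1 - Fc w)) vstar := by
    have hmem : Icc (0:ℝ) vbar ∈ nhds vstar := Icc_mem_nhds hvs0 hvsv
    filter_upwards [hmem] with w hw
    show w * (1 - Fc w) ≤ vstar * (1 - Fc vstar)
    rw [hFc_eq w hw, hFc_eq vstar hvs]
    exact hmax w hw
  have hfoc : vstar * fc vstar = 1 - F vstar := by
    have := hloc.hasDerivAt_eq_zero (hRf vstar)
    rw [hFc_eq vstar hvs] at this
    linarith [this]
  have hhaz : f vstar / (1 - F vstar) = 1 / vstar := by
    have h1 : fc vstar ≠ 0 := (hfc_pos vstar).ne'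
    rw [← hfc_eq vstar hvs, ← hfoc]
    field_simp
  -- the tilted survival function
  set φ : ℝ → ℝ := fun t => (1 - Fc t) * Real.exp (t / vstar) with hphi
  have hφd : ∀ t, HasDerivAt φ
      ((-fc t) * Real.exp (t / vstar) + (1 - Fc t) * (Real.exp (t / vstar) * (1 / vstar))) t := by
    intro t
    have hE : HasDerivAt (fun t : ℝ => Real.exp (t / vstar)) (Real.exp (t / vstar) * (1 / vstar)) t :=
      ((hasDerivAt_id t).div_const vstar).exp
    exact ((hFc_deriv t).const_sub 1).mul hE
  have hφc : Continuous φ :=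
    (continuous_const.sub hFc_cont).mul (Real.continuous_exp.comp (continuous_id.div_const vstar))
  have hmono : MonotoneOn φ (Icc 0 vstar) := by
    refine monotoneOn_of_deriv_nonneg (convex_Icc _ _) hφc.continuousOn
      (fun x _ => (hφd x).differentiableAt.differentiableWithinAt) ?_
    rw [interior_Icc]
    intro x hx
    have hxI : x ∈ Icc 0 vbar := ⟨hx.1.le, by linarith [hx.2]⟩
    have hm := hMHR x vstar hxI hvs hx.2.le hvsv
    rw [hhaz] at hm
    have hFx : 0 < 1 - F x := by
      rw [← hFc_eq x hxI]
      have := hFc_lt x (by linarith [hx.2])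
      linarith
    have hkey : fc x * vstar ≤ 1 - Fc x := by
      rw [hfc_eq x hxI, hFc_eq x hxI]
      rw [div_le_div_iff₀ hFx hvs0] at hm
      linarith [hm]
    have h2 : 0 ≤ (1 - Fc x) * (1 / vstar) - fc x := by
      have : fc x ≤ (1 - Fc x) / vstar := (le_div_iff₀ hvs0).2 hkey
      rw [mul_one_div]
      linarith
    rw [(hφd x).deriv]
    nlinarith [mul_nonneg (Real.exp_pos (x / vstar)).le h2]
  have hanti : AntitoneOn φ (Icc vstar vbar) := by
    refine antitoneOn_of_deriv_nonpos (convex_Icc _ _) hφc.continuousOn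
      (fun x _ => (hφd x).differentiableAt.differentiableWithinAt) ?_
    rw [interior_Icc]
    intro x hx
    have hxI : x ∈ Icc 0 vbar := ⟨by linarith [hx.1, hvs0], hx.2.le⟩
    have hm := hMHR vstar x hvs hxI hx.1.le hx.2
    rw [hhaz] at hm
    have hFx : 0 < 1 - F x := by
      rw [← hFc_eq x hxI]
      have := hFc_lt x hx.2
      linarith
    have hkey : 1 - Fc x ≤ fc x * vstar := by
      rw [hfc_eq x hxI, hFc_eq x hxI]
      rw [div_le_div_iff₀ hvs0 hFx] at hm
      linarith [hm]
    have h2 : (1 - Fc x) * (1 / vstar) - fc x ≤ 0 := by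
      have : (1 - Fc x) / vstar ≤ fc x := (div_le_iff₀ hvs0).2 hkey
      rw [mul_one_div]
      linarith
    rw [(hφd x).deriv]
    nlinarith [mul_nonpos_of_nonneg_of_nonpos (Real.exp_pos (x / vstar)).le h2]
  have hφle : ∀ t ∈ Icc 0 vbar, φ t ≤ (1 - F vstar) * Real.exp 1 := by
    intro t ht
    have hφv : φ vstar = (1 - F vstar) * Real.exp 1 := by
      simp [hphi, hFc_eq vstar hvs, div_self hvs0.ne']
    rw [← hφv]
    rcases le_total t vstar with h | h
    · exact hmono ⟨ht.1, h⟩ ⟨hvs.1, le_rfl⟩ h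
    · exact hanti ⟨le_rfl, hvs.2⟩ ⟨h, ht.2⟩ h
  have hsurv : ∀ t ∈ Icc 0 vbar,
      1 - Fc t ≤ (1 - F vstar) * Real.exp 1 * Real.exp (-(t / vstar)) := by
    intro t ht
    calc 1 - Fc t = ((1 - Fc t) * Real.exp (t / vstar)) * Real.exp (-(t / vstar)) := by
          rw [mul_assoc, ← Real.exp_add]; simp
    _ ≤ (1 - F vstar) * Real.exp 1 * Real.exp (-(t / vstar)) :=
          mul_le_mul_of_nonneg_right (hφle t ht) (Real.exp_pos _).le
  -- integration by parts: mean = ∫ (1 - Fc)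
  have hP : ∀ t, HasDerivAt (fun t => t * (Fc t - 1)) ((Fc t - 1) + t * fc t) t := by
    intro t
    have := (hasDerivAt_id t).mul ((hFc_deriv t).sub_const 1)
    exact this.congr_deriv (by simp only [id_eq, one_mul])
  have hint2 : IntervalIntegrable (fun t => Fc t - 1) MeasureTheory.volume 0 vbar :=
    (hFc_cont.sub continuous_const).intervalIntegrable _ _
  have hint3 : IntervalIntegrable (fun t => t * fc t) MeasureTheory.volume 0 vbar :=
    (continuous_id.mul hfc_cont).intervalIntegrable _ _
  have hparts : (∫ t in (0:ℝ)..vbar, ((Fc t - 1) + t * fc t)) = 0 := by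
    rw [intervalIntegral.integral_eq_sub_of_hasDerivAt (fun t _ => hP t) (hint2.add hint3)]
    simp [hFc_vbar]
  have hsplit : (∫ t in (0:ℝ)..vbar, (Fc t - 1)) + (∫ t in (0:ℝ)..vbar, t * fc t) = 0 := by
    rw [← intervalIntegral.integral_add hint2 hint3]
    exact hparts
  have hmean2 : mean = ∫ t in (0:ℝ)..vbar, (1 - Fc t) := by
    rw [hmean]
    have e1 : (∫ t in (0:ℝ)..vbar, t * f t) = ∫ t in (0:ℝ)..vbar, t * fc t := by
      refine intervalIntegral.integral_congr fun s hs => ?_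
      rw [uIcc_of_le hvbar.le] at hs
      rw [hfc_eq s hs]
    have e2 : (∫ t in (0:ℝ)..vbar, (1 - Fc t)) = - ∫ t in (0:ℝ)..vbar, (Fc t - 1) := by
      rw [← intervalIntegral.integral_neg]
      congr 1
      ext t
      ring
    rw [e1, e2]
    linarith [hsplit]
  -- evaluate the exponential integral
  have hExp : ∀ t, HasDerivAt (fun t : ℝ => -vstar * Real.exp (-(t / vstar)))
      (Real.exp (-(t / vstar))) t := by
    intro t
    have h1 : HasDerivAt (fun t : ℝ => Real.exp (-(t / vstar)))
        (Real.exp (-(t / vstar)) * (-(1 / vstar))) t :=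
      (((hasDerivAt_id t).div_const vstar).neg).exp
    have := h1.const_mul (-vstar)
    have hv : vstar * (1 / vstar) = 1 := mul_one_div_cancel hvs0.ne'
    exact this.congr_deriv (by linear_combination (Real.exp (-(t / vstar))) * hv)
  have hExpInt : (∫ t in (0:ℝ)..vbar, Real.exp (-(t / vstar)))
      = -vstar * Real.exp (-(vbar / vstar)) + vstar := by
    rw [intervalIntegral.integral_eq_sub_of_hasDerivAt (fun t _ => hExp t)
      (Continuous.intervalIntegrable (by fun_prop) _ _)]
    simp
  have hIle : (∫ t in (0:ℝ)..vbar, (1 - Fc t))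
      ≤ (1 - F vstar) * Real.exp 1 * (∫ t in (0:ℝ)..vbar, Real.exp (-(t / vstar))) := by
    rw [← intervalIntegral.integral_const_mul]
    refine intervalIntegral.integral_mono_on hvbar.le
      ((continuous_const.sub hFc_cont).intervalIntegrable _ _)
      (Continuous.intervalIntegrable (by fun_prop) _ _) ?_
    exact hsurv
  rw [hmean2]
  have hfinal : (1 - F vstar) * Real.exp 1 * (-vstar * Real.exp (-(vbar / vstar)) + vstar)
      ≤ Real.exp 1 * (vstar * (1 - F vstar)) := by
    nlinarith [mul_pos (mul_pos hqs (Real.exp_pos 1)) (mul_pos hvs0 (Real.exp_pos (-(vbar / vstar))))]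
  calc (∫ t in (0:ℝ)..vbar, (1 - Fc t))
      ≤ (1 - F vstar) * Real.exp 1 * (∫ t in (0:ℝ)..vbar, Real.exp (-(t / vstar))) := hIle
  _ = (1 - F vstar) * Real.exp 1 * (-vstar * Real.exp (-(vbar / vstar)) + vstar) := by
      rw [hExpInt]
  _ ≤ Real.exp 1 * (vstar * (1 - F vstar)) := hfinal
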